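/- Let m be a positive even integer and θ∈(0,1) with m(1−θ)>4. Let w ∈ W_{m,θ/2}(ℝ) and φ ∈ H (the Cameron–Martin space of absolutely continuous paths on [0,1] starting at 0 with square-integrable derivative). Define the iterated integral C(w,φ)_{s,t} = ∫_s^t (w_u − w_s) φ'(u) du and C(φ,w)_{s,t} = (w_t−w_s)(φ_t−φ_s) − C(w,φ)_{s,t}. Then: ‖φ‖_{m,θ/2} ≤ ‖φ‖_H, ‖C(w,φ)‖_{m,θ} ≤ ‖w‖_{m,θ/2} ‖φ‖_H, and ‖C(φ,w)‖_{m,θ} ≤ 2 ‖w‖_{m,θ/2} ‖φ‖_H. -/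

import Mathlib

open MeasureTheory Set

/-- The simplex `Δ = {(s,t) : 0 ≤ s ≤ t ≤ 1}`. -/
def simplexSet : Set (ℝ × ℝ) := {p | 0 ≤ p.1 ∧ p.1 ≤ p.2 ∧ p.2 ≤ 1}

/-- The Besov-type norm `‖φ‖_{m,θ} = (∬_Δ |φ(s,t)|^m/(t−s)^{2+mθ} ds dt)^{1/m}` of a
function `φ` on the simplex. -/
noncomputable def besovNorm (m : ℕ) (θ : ℝ) (φ : ℝ → ℝ → ℝ) : ℝ :=
  (∫ p in simplexSet, |φ p.1 p.2| ^ m / (p.2 - p.1) ^ (2 + (m : ℝ) * θ)) ^ ((1 : ℝ) / m)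

/-- Integrability of the Besov integrand (finiteness of the `‖·‖_{m,θ}` norm). -/
def BesovFinite (m : ℕ) (θ : ℝ) (φ : ℝ → ℝ → ℝ) : Prop :=
  IntegrableOn (fun p : ℝ × ℝ => |φ p.1 p.2| ^ m / (p.2 - p.1) ^ (2 + (m : ℝ) * θ)) simplexSet

/-- The increment Besov norm `‖x‖_{m,θ}` of a path, i.e. `‖(s,t) ↦ x_t − x_s‖_{m,θ}`. -/
noncomputable def incNorm (m : ℕ) (θ : ℝ) (x : ℝ → ℝ) : ℝ :=
  besovNorm m θ (fun s t => x t - x s)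

/-- The Hölder norm `‖φ‖_{H,θ} = sup_{0 ≤ s < t ≤ 1} |φ(s,t)|/(t−s)^θ` on the simplex. -/
noncomputable def holderNorm (θ : ℝ) (φ : ℝ → ℝ → ℝ) : ℝ :=
  sSup {r | ∃ s t : ℝ, 0 ≤ s ∧ s < t ∧ t ≤ 1 ∧ r = |φ s t| / (t - s) ^ θ}

/-- Membership in `W_{m,θ}(ℝ)`: continuous paths on `[0,1]` starting at `0` with finite
increment Besov norm. -/
def MemW (m : ℕ) (θ : ℝ) (x : ℝ → ℝ) : Prop :=
  ContinuousOn x (Icc (0 : ℝ) 1) ∧ x 0 = 0 ∧ BesovFinite m θ (fun s t => x t - x s)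

/-- The constant `M_{m,θ} = sup_{x ≠ 0, x ∈ W_{m,θ/2}(ℝ)} ‖x‖_{H,θ/2}/‖x‖_{m,θ/2}`. -/
noncomputable def besovHolderConst (m : ℕ) (θ : ℝ) : ℝ :=
  sSup {c | ∃ x : ℝ → ℝ, MemW m (θ / 2) x ∧ (∃ t ∈ Icc (0:ℝ) 1, x t ≠ 0) ∧
    c = holderNorm (θ / 2) (fun s t => x t - x s) / incNorm m (θ / 2) x}

lemma measurableSet_simplexSet : MeasurableSet simplexSet := by
  have h1 : MeasurableSet {p : ℝ × ℝ | 0 ≤ p.1} := measurableSet_le measurable_const measurable_fst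
  have h2 : MeasurableSet {p : ℝ × ℝ | p.1 ≤ p.2} := measurableSet_le measurable_fst measurable_snd
  have h3 : MeasurableSet {p : ℝ × ℝ | p.2 ≤ 1} := measurableSet_le measurable_snd measurable_const
  exact (h1.inter (h2.inter h3) : _)

lemma volume_simplexSet_le : (volume simplexSet) ≤ 1 := by
  have hsub : simplexSet ⊆ Icc (0:ℝ) 1 ×ˢ Icc (0:ℝ) 1 := by
    rintro ⟨s, t⟩ ⟨h0, h1, h2⟩
    exact ⟨⟨h0, h1.trans h2⟩, ⟨h0.trans h1, h2⟩⟩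
  calc volume simplexSet ≤ volume (Icc (0:ℝ) 1 ×ˢ Icc (0:ℝ) 1) := measure_mono hsub
    _ = 1 := by
        rw [MeasureTheory.Measure.volume_eq_prod, MeasureTheory.Measure.prod_prod,
          Real.volume_Icc]
        norm_num

lemma besov_le_of_lintegral_le {m : ℕ} (hm0 : 0 < m) {θ C : ℝ} {f : ℝ → ℝ → ℝ} (hC : 0 ≤ C)
    (hmeas : AEStronglyMeasurable
      (fun p : ℝ × ℝ => |f p.1 p.2| ^ m / (p.2 - p.1) ^ (2 + (m : ℝ) * θ))
      (volume.restrict simplexSet))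
    (h : ∫⁻ p in simplexSet,
        ENNReal.ofReal (|f p.1 p.2| ^ m / (p.2 - p.1) ^ (2 + (m : ℝ) * θ))
        ≤ ENNReal.ofReal (C ^ m)) :
    besovNorm m θ f ≤ C := by
  have hnn : 0 ≤ᵐ[volume.restrict simplexSet]
      (fun p : ℝ × ℝ => |f p.1 p.2| ^ m / (p.2 - p.1) ^ (2 + (m : ℝ) * θ)) := by
    refine ae_restrict_of_forall_mem measurableSet_simplexSet (fun p hp => ?_)
    exact div_nonneg (pow_nonneg (abs_nonneg _) _)
      (Real.rpow_nonneg (sub_nonneg.2 hp.2.1) _)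
  have hint : ∫ p in simplexSet, |f p.1 p.2| ^ m / (p.2 - p.1) ^ (2 + (m : ℝ) * θ) ≤ C ^ m := by
    rw [integral_eq_lintegral_of_nonneg_ae hnn hmeas]
    calc (∫⁻ p in simplexSet,
          ENNReal.ofReal (|f p.1 p.2| ^ m / (p.2 - p.1) ^ (2 + (m : ℝ) * θ))).toReal
        ≤ (ENNReal.ofReal (C ^ m)).toReal := ENNReal.toReal_mono ENNReal.ofReal_ne_top h
      _ = C ^ m := ENNReal.toReal_ofReal (by positivity)
  have h0 : 0 ≤ ∫ p in simplexSet, |f p.1 p.2| ^ m / (p.2 - p.1) ^ (2 + (m : ℝ) * θ) :=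
    integral_nonneg_of_ae hnn
  unfold besovNorm
  calc (∫ p in simplexSet, |f p.1 p.2| ^ m / (p.2 - p.1) ^ (2 + (m : ℝ) * θ)) ^ ((1:ℝ)/m)
      ≤ (C ^ m) ^ ((1:ℝ)/m) := Real.rpow_le_rpow h0 hint (by positivity)
    _ = C := by
        rw [← Real.rpow_natCast C m, ← Real.rpow_mul hC]
        rw [mul_one_div, div_self (by exact_mod_cast hm0.ne' : (m:ℝ) ≠ 0), Real.rpow_one]

lemma integral_abs_mul_le {a b : ℝ} {f g : ℝ → ℝ}
    (hf : AEStronglyMeasurable f (volume.restrict (Ioc a b)))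
    (hg : AEStronglyMeasurable g (volume.restrict (Ioc a b)))
    {Cf : ℝ} (hfC : ∀ x, |f x| ≤ Cf)
    (hg2 : IntegrableOn (fun x => g x ^ 2) (Ioc a b)) :
    ∫ x in Ioc a b, |f x * g x|
      ≤ Real.sqrt (∫ x in Ioc a b, f x ^ 2) * Real.sqrt (∫ x in Ioc a b, g x ^ 2) := by
  set μ := volume.restrict (Ioc a b) with hμ
  haveI : IsFiniteMeasure μ := by
    constructor
    rw [hμ, Measure.restrict_apply_univ, Real.volume_Ioc]
    exact ENNReal.ofReal_lt_top
  have h2 : (2:ℝ).HolderConjugate 2 := Real.HolderConjugate.two_two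
  have hof2 : ENNReal.ofReal (2:ℝ) = 2 := by
    rw [ENNReal.ofReal_ofNat]
  have hf2 : MemLp (fun x => |f x|) (ENNReal.ofReal (2:ℝ)) μ := by
    have habs : AEStronglyMeasurable (fun x => |f x|) μ := by
      simpa [Real.norm_eq_abs] using hf.norm
    refine (memLp_top_of_bound habs Cf ?_).mono_exponent le_top
    exact Filter.Eventually.of_forall (fun x => by
      rw [Real.norm_eq_abs, abs_abs]; exact hfC x)
  have hg2' : MemLp (fun x => |g x|) (ENNReal.ofReal (2:ℝ)) μ := by
    rw [hof2]
    have habs : AEStronglyMeasurable (fun x => |g x|) μ := by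
      simpa [Real.norm_eq_abs] using hg.norm
    refine (memLp_two_iff_integrable_sq habs).2 ?_
    simp only [sq_abs]
    exact hg2
  have key := integral_mul_le_Lp_mul_Lq_of_nonneg h2
    (Filter.Eventually.of_forall (fun x => abs_nonneg (f x)))
    (Filter.Eventually.of_forall (fun x => abs_nonneg (g x))) hf2 hg2'
  have e1 : ∀ x : ℝ, |f x| ^ (2:ℝ) = f x ^ 2 := fun x => by
    rw [show (2:ℝ) = ((2:ℕ):ℝ) by norm_num, Real.rpow_natCast, sq_abs]
  have e2 : ∀ x : ℝ, |g x| ^ (2:ℝ) = g x ^ 2 := fun x => by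
    rw [show (2:ℝ) = ((2:ℕ):ℝ) by norm_num, Real.rpow_natCast, sq_abs]
  simp_rw [e1, e2] at key
  rw [Real.sqrt_eq_rpow, Real.sqrt_eq_rpow]
  calc ∫ x in Ioc a b, |f x * g x| = ∫ x, |f x| * |g x| ∂μ := by
        rw [hμ]; exact setIntegral_congr_fun measurableSet_Ioc (fun x _ => abs_mul _ _)
    _ ≤ (∫ x, f x ^ 2 ∂μ) ^ ((1:ℝ)/2) * (∫ x, g x ^ 2 ∂μ) ^ ((1:ℝ)/2) := key
    _ = (∫ x in Ioc a b, f x ^ 2) ^ ((1:ℝ)/2) * (∫ x in Ioc a b, g x ^ 2) ^ ((1:ℝ)/2) := by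
        rw [hμ]

lemma pow_setIntegral_le {a b : ℝ} (hab : a ≤ b) {f : ℝ → ℝ} {k : ℕ} (hk : 2 ≤ k)
    (hfm : AEStronglyMeasurable f (volume.restrict (Ioc a b)))
    (hf0 : ∀ x, 0 ≤ f x) {Cf : ℝ} (hfC : ∀ x, f x ≤ Cf) :
    (∫ x in Ioc a b, f x) ^ k ≤ (b - a) ^ (k - 1) * ∫ x in Ioc a b, f x ^ k := by
  set μ := volume.restrict (Ioc a b) with hμ
  haveI : IsFiniteMeasure μ := by
    constructor
    rw [hμ, Measure.restrict_apply_univ, Real.volume_Ioc]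
    exact ENNReal.ofReal_lt_top
  have hk1 : (1:ℝ) < (k:ℝ) := by exact_mod_cast lt_of_lt_of_le one_lt_two hk
  have hkne : (k:ℝ) ≠ 0 := by positivity
  have hpq : ((k:ℝ)).HolderConjugate ((k:ℝ)/((k:ℝ)-1)) :=
    (Real.holderConjugate_iff_eq_conjExponent hk1).2 rfl
  have hfLp : MemLp f (ENNReal.ofReal (k:ℝ)) μ := by
    refine (memLp_top_of_bound hfm Cf ?_).mono_exponent le_top
    exact Filter.Eventually.of_forall (fun x => by
      rw [Real.norm_of_nonneg (hf0 x)]; exact hfC x)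
  have h1Lp : MemLp (fun _ : ℝ => (1:ℝ)) (ENNReal.ofReal ((k:ℝ)/((k:ℝ)-1))) μ :=
    memLp_const 1
  have key := integral_mul_le_Lp_mul_Lq_of_nonneg hpq
    (Filter.Eventually.of_forall hf0)
    (Filter.Eventually.of_forall (fun _ => zero_le_one)) hfLp h1Lp
  simp only [mul_one, Real.one_rpow] at key
  have hvol : ∫ x, (1:ℝ) ∂μ = b - a := by
    rw [hμ, setIntegral_const, Real.volume_real_Ioc, smul_eq_mul, mul_one,
      max_eq_left (by linarith)]
  rw [hvol] at key
  have efk : ∀ x : ℝ, f x ^ ((k:ℝ)) = f x ^ k := fun x => Real.rpow_natCast _ _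
  simp_rw [efk] at key
  -- key : ∫ f ≤ (∫ f^k)^(1/k) * (b-a)^(1/(k/(k-1)))
  have hX0 : 0 ≤ ∫ x, f x ^ k ∂μ := integral_nonneg (fun x => pow_nonneg (hf0 x) k)
  have hI0 : 0 ≤ ∫ x, f x ∂μ := integral_nonneg hf0
  have hba : 0 ≤ b - a := by linarith
  have step := pow_le_pow_left₀ hI0 key k
  rw [mul_pow] at step
  have eX : ((∫ x, f x ^ k ∂μ) ^ ((1:ℝ)/(k:ℝ))) ^ k = ∫ x, f x ^ k ∂μ := by
    rw [← Real.rpow_natCast ((∫ x, f x ^ k ∂μ) ^ ((1:ℝ)/(k:ℝ))) k, ← Real.rpow_mul hX0,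
      one_div, inv_mul_cancel₀ hkne, Real.rpow_one]
  have eB : ((b - a) ^ ((1:ℝ)/((k:ℝ)/((k:ℝ)-1)))) ^ k = (b - a) ^ (k - 1) := by
    rw [← Real.rpow_natCast ((b - a) ^ ((1:ℝ)/((k:ℝ)/((k:ℝ)-1)))) k, ← Real.rpow_mul hba]
    rw [show (1:ℝ)/((k:ℝ)/((k:ℝ)-1)) * (k:ℝ) = (k:ℝ) - 1 by field_simp]
    rw [show ((k:ℝ) - 1) = ((k - 1 : ℕ) : ℝ) by
      push_cast [Nat.cast_sub (by omega : 1 ≤ k)]; ring]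
    exact Real.rpow_natCast _ _
  rw [eX, eB] at step
  calc (∫ x in Ioc a b, f x) ^ k = (∫ x, f x ∂μ) ^ k := by rw [hμ]
    _ ≤ (∫ x, f x ^ k ∂μ) * (b - a) ^ (k - 1) := step
    _ = (b - a) ^ (k - 1) * ∫ x in Ioc a b, f x ^ k := by rw [hμ, mul_comm]

lemma key_fubini {v : ℝ → ℝ} (hv : Continuous v) (m : ℕ) {β c : ℝ} (hc : 0 ≤ c)
    (hδ : 0 < β + (2 + c)) :
    (∫⁻ p in simplexSet, ENNReal.ofReal ((p.2 - p.1) ^ β) *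
        ∫⁻ u in Ioc p.1 p.2, ENNReal.ofReal (|v u - v p.1| ^ m)) ≤
      ∫⁻ p in simplexSet, ENNReal.ofReal (|v p.2 - v p.1| ^ m / (p.2 - p.1) ^ (2 + c)) := by
  classical
  set T : Set ((ℝ × ℝ) × ℝ) := {q | q.1 ∈ simplexSet ∧ q.2 ∈ Ioc q.1.1 q.1.2} with hT
  have hTmeas : MeasurableSet T := by
    have h1 : MeasurableSet {q : (ℝ × ℝ) × ℝ | q.1 ∈ simplexSet} :=
      measurable_fst measurableSet_simplexSet
    have h2 : MeasurableSet {q : (ℝ × ℝ) × ℝ | q.1.1 < q.2} :=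
      measurableSet_lt (measurable_fst.fst) measurable_snd
    have h3 : MeasurableSet {q : (ℝ × ℝ) × ℝ | q.2 ≤ q.1.2} :=
      measurableSet_le measurable_snd (measurable_fst.snd)
    exact h1.inter (h2.inter h3)
  set g : (ℝ × ℝ) × ℝ → ENNReal := fun q =>
    ENNReal.ofReal ((q.1.2 - q.1.1) ^ β) * ENNReal.ofReal (|v q.2 - v q.1.1| ^ m) with hg
  have hgmeas : Measurable g := by
    apply Measurable.fun_mul
    · exact ((measurable_fst.snd.sub measurable_fst.fst).pow_const β).ennreal_ofReal
    · exact ((((hv.measurable.comp measurable_snd).sub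
        (hv.measurable.comp measurable_fst.fst)).abs.pow_const m)).ennreal_ofReal
  set Φ : (ℝ × ℝ) × ℝ → ENNReal := T.indicator g with hΦ
  have hΦmeas : Measurable Φ := hgmeas.indicator hTmeas
  set E : Set (ℝ × ℝ) := {q | 0 ≤ q.1 ∧ q.1 < q.2 ∧ q.2 ≤ 1} with hE
  have hEmeas : MeasurableSet E := by
    have h1 : MeasurableSet {p : ℝ × ℝ | 0 ≤ p.1} := measurableSet_le measurable_const measurable_fst
    have h2 : MeasurableSet {p : ℝ × ℝ | p.1 < p.2} := measurableSet_lt measurable_fst measurable_snd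
    have h3 : MeasurableSet {p : ℝ × ℝ | p.2 ≤ 1} := measurableSet_le measurable_snd measurable_const
    exact h1.inter (h2.inter h3)
  set R : ℝ × ℝ → ENNReal := E.indicator
    (fun q => ENNReal.ofReal (|v q.2 - v q.1| ^ m / (q.2 - q.1) ^ (2 + c))) with hR
  have hRmeas : Measurable R := by
    apply Measurable.indicator _ hEmeas
    apply Measurable.ennreal_ofReal
    exact (((hv.measurable.comp measurable_snd).sub
      (hv.measurable.comp measurable_fst)).abs.pow_const m).div
      ((measurable_snd.sub measurable_fst).pow_const (2 + c))
  -- step 1 : LHS = iterated integral of Φ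
  have step1 : (∫⁻ p in simplexSet, ENNReal.ofReal ((p.2 - p.1) ^ β) *
        ∫⁻ u in Ioc p.1 p.2, ENNReal.ofReal (|v u - v p.1| ^ m))
      = ∫⁻ p : ℝ × ℝ, ∫⁻ u : ℝ, Φ (p, u) := by
    rw [← lintegral_indicator measurableSet_simplexSet]
    apply lintegral_congr
    intro p
    by_cases hp : p ∈ simplexSet
    · rw [indicator_of_mem hp]
      rw [← lintegral_const_mul' _ _ ENNReal.ofReal_ne_top]
      rw [← lintegral_indicator (measurableSet_Ioc (a := p.1) (b := p.2))]
      apply lintegral_congr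
      intro u
      by_cases hu : u ∈ Ioc p.1 p.2
      · rw [indicator_of_mem hu, hΦ, indicator_of_mem (show (p,u) ∈ T from ⟨hp, hu⟩)]
      · rw [indicator_of_notMem hu, hΦ, indicator_of_notMem
          (show (p,u) ∉ T from fun h => hu h.2)]
    · rw [indicator_of_notMem hp]
      symm
      simp only [hΦ]
      rw [show (∫⁻ u : ℝ, T.indicator g (p, u)) = ∫⁻ _ : ℝ, 0 from
        lintegral_congr (fun u => indicator_of_notMem (fun h => hp h.1) g)]
      simp
  rw [step1]
  -- step 2 : split the ℝ² integral
  have hF : Measurable fun p : ℝ × ℝ => ∫⁻ u : ℝ, Φ (p, u) := by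
    apply Measurable.lintegral_prod_right (f := fun p u => Φ (p, u))
    exact hΦmeas
  rw [MeasureTheory.Measure.volume_eq_prod, lintegral_prod _ hF.aemeasurable]
  -- step 3 : swap t and u, then bound
  have swap : ∀ s : ℝ, (∫⁻ t : ℝ, ∫⁻ u : ℝ, Φ ((s, t), u))
      = ∫⁻ u : ℝ, ∫⁻ t : ℝ, Φ ((s, t), u) := by
    intro s
    apply lintegral_lintegral_swap
    exact (hΦmeas.comp ((measurable_const.prodMk measurable_fst).prodMk measurable_snd)
      : Measurable fun z : ℝ × ℝ => Φ ((s, z.1), z.2)).aemeasurable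
  have inner_bound : ∀ s u : ℝ, (∫⁻ t : ℝ, Φ ((s, t), u)) ≤ R (s, u) := by
    intro s u
    by_cases hsu : (s, u) ∈ E
    · obtain ⟨hs0, hsu', hu1⟩ := hsu
      have hval0 : (0:ℝ) ≤ |v u - v s| ^ m := pow_nonneg (abs_nonneg _) m
      have hptwise : ∀ t : ℝ, Φ ((s, t), u) ≤
          (Icc u 1).indicator
            (fun _ => ENNReal.ofReal (|v u - v s| ^ m / (u - s) ^ (2 + c))) t := by
        intro t
        rw [hΦ]
        by_cases ht : ((s, t), u) ∈ T
        · obtain ⟨⟨h0, h1, h2⟩, h3, h4⟩ := ht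
          rw [indicator_of_mem (show ((s,t),u) ∈ T from ⟨⟨h0, h1, h2⟩, h3, h4⟩),
            indicator_of_mem (show t ∈ Icc u 1 from ⟨h4, h2⟩)]
          simp only [hg]
          have hus : 0 < u - s := sub_pos.2 hsu'
          have hts : 0 < t - s := lt_of_lt_of_le hus (by linarith)
          have hts1 : t - s ≤ 1 := by linarith
          have hb : (t - s) ^ β ≤ (u - s) ^ (-(2 + c)) := by
            have e : (t - s) ^ β = (t - s) ^ (-(2 + c)) * (t - s) ^ (β + (2 + c)) := by
              rw [← Real.rpow_add hts]; ring_nf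
            rw [e]
            calc (t - s) ^ (-(2 + c)) * (t - s) ^ (β + (2 + c))
                ≤ (u - s) ^ (-(2 + c)) * 1 := by
                  apply mul_le_mul
                  · exact Real.rpow_le_rpow_of_nonpos hus (by linarith) (by linarith)
                  · exact Real.rpow_le_one hts.le hts1 hδ.le
                  · exact Real.rpow_nonneg hts.le _
                  · exact Real.rpow_nonneg hus.le _
              _ = (u - s) ^ (-(2 + c)) := mul_one _
          calc ENNReal.ofReal ((t - s) ^ β) * ENNReal.ofReal (|v u - v s| ^ m)
              ≤ ENNReal.ofReal ((u - s) ^ (-(2 + c))) * ENNReal.ofReal (|v u - v s| ^ m) := by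
                exact mul_le_mul_left (ENNReal.ofReal_le_ofReal hb) _
            _ = ENNReal.ofReal (|v u - v s| ^ m / (u - s) ^ (2 + c)) := by
                rw [← ENNReal.ofReal_mul (Real.rpow_nonneg hus.le _),
                  Real.rpow_neg hus.le, div_eq_mul_inv, mul_comm]
        · rw [indicator_of_notMem ht]
          exact zero_le
      calc (∫⁻ t : ℝ, Φ ((s, t), u)) ≤ ∫⁻ t : ℝ, (Icc u 1).indicator
            (fun _ => ENNReal.ofReal (|v u - v s| ^ m / (u - s) ^ (2 + c))) t :=
            lintegral_mono hptwise
        _ = ENNReal.ofReal (|v u - v s| ^ m / (u - s) ^ (2 + c)) * volume (Icc u 1) := by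
            rw [lintegral_indicator measurableSet_Icc, setLIntegral_const]
        _ ≤ ENNReal.ofReal (|v u - v s| ^ m / (u - s) ^ (2 + c)) * 1 := by
            apply mul_le_mul_right
            rw [Real.volume_Icc]
            exact ENNReal.ofReal_le_one.2 (by linarith)
        _ = R (s, u) := by rw [mul_one, hR, indicator_of_mem (show (s,u) ∈ E from ⟨hs0, hsu', hu1⟩)]
    · have hzero : ∀ t : ℝ, Φ ((s, t), u) = 0 := by
        intro t
        rw [hΦ]
        apply indicator_of_notMem
        rintro ⟨⟨h0, h1, h2⟩, h3, h4⟩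
        exact hsu ⟨h0, h3, le_trans h4 h2⟩
      rw [hR, indicator_of_notMem hsu]
      rw [show (∫⁻ t : ℝ, Φ ((s, t), u)) = ∫⁻ _ : ℝ, (0:ENNReal) from lintegral_congr hzero]
      simp
  calc ∫⁻ s : ℝ, ∫⁻ t : ℝ, ∫⁻ u : ℝ, Φ ((s, t), u)
      = ∫⁻ s : ℝ, ∫⁻ u : ℝ, ∫⁻ t : ℝ, Φ ((s, t), u) := lintegral_congr swap
    _ ≤ ∫⁻ s : ℝ, ∫⁻ u : ℝ, R (s, u) :=
        lintegral_mono (fun s => lintegral_mono (fun u => inner_bound s u))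
    _ = ∫⁻ q : ℝ × ℝ, R q := by
        rw [MeasureTheory.Measure.volume_eq_prod, lintegral_prod _ hRmeas.aemeasurable]
    _ = ∫⁻ q in E, ENNReal.ofReal (|v q.2 - v q.1| ^ m / (q.2 - q.1) ^ (2 + c)) := by
        rw [hR, lintegral_indicator hEmeas]
    _ ≤ ∫⁻ p in simplexSet, ENNReal.ofReal (|v p.2 - v p.1| ^ m / (p.2 - p.1) ^ (2 + c)) := by
        apply lintegral_mono_set
        rintro ⟨s, t⟩ ⟨h0, h1, h2⟩
        exact ⟨h0, h1.le, h2⟩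

open intervalIntegral


set_option maxHeartbeats 2000000

/-- Let `m` be a positive even integer and `θ ∈ (0,1)` with `m(1−θ) > 4`.
Let `w ∈ W_{m,θ/2}(ℝ)` and let `φ ∈ H` be a Cameron–Martin path, `φ t = ∫₀ᵗ φ'(u) du` with
`φ'` square-integrable on `[0,1]` and `‖φ‖_H = (∫₀¹ φ'(u)² du)^{1/2}`.  With
`C(w,φ)_{s,t} = ∫_s^t (w_u − w_s) φ'(u) du` and
`C(φ,w)_{s,t} = (w_t − w_s)(φ_t − φ_s) − C(w,φ)_{s,t}`, one has
`‖φ‖_{m,θ/2} ≤ ‖φ‖_H`, `‖C(w,φ)‖_{m,θ} ≤ ‖w‖_{m,θ/2} ‖φ‖_H` and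
`‖C(φ,w)‖_{m,θ} ≤ 2 ‖w‖_{m,θ/2} ‖φ‖_H`. -/
theorem iterated_integral_cameron_martin_bounds
    (m : ℕ) (hm : Even m) (hm0 : 0 < m) (θ : ℝ) (hθ0 : 0 < θ) (hθ1 : θ < 1)
    (hmθ : (m : ℝ) * (1 - θ) > 4)
    (w : ℝ → ℝ) (hw : MemW m (θ / 2) w)
    (φ φ' : ℝ → ℝ)
    (hφ'int : IntegrableOn φ' (Icc (0:ℝ) 1))
    (hφ'sq : IntegrableOn (fun u => φ' u ^ 2) (Icc (0:ℝ) 1))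
    (hφrepr : ∀ t ∈ Icc (0:ℝ) 1, φ t = ∫ u in (0:ℝ)..t, φ' u) :
    incNorm m (θ / 2) φ ≤ Real.sqrt (∫ u in (0:ℝ)..1, φ' u ^ 2) ∧
    besovNorm m θ (fun s t => ∫ u in s..t, (w u - w s) * φ' u)
      ≤ incNorm m (θ / 2) w * Real.sqrt (∫ u in (0:ℝ)..1, φ' u ^ 2) ∧
    besovNorm m θ
        (fun s t => (w t - w s) * (φ t - φ s) - ∫ u in s..t, (w u - w s) * φ' u)
      ≤ 2 * incNorm m (θ / 2) w * Real.sqrt (∫ u in (0:ℝ)..1, φ' u ^ 2) := by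
  classical
  obtain ⟨hwc, hw0, hwB⟩ := hw
  obtain ⟨k, hkk⟩ := hm
  have hm4 : 4 < m := by
    have h1 : (0:ℝ) ≤ (m:ℝ) * θ := mul_nonneg (Nat.cast_nonneg m) hθ0.le
    have : (4:ℝ) < (m:ℝ) := by nlinarith
    exact_mod_cast this
  have hk2 : 2 ≤ k := by omega
  have hkm : m = 2 * k := by omega
  have hmeven : Even m := ⟨k, hkk⟩
  have hMk : (m:ℝ) = 2 * (k:ℝ) := by exact_mod_cast hkm
  have hMne : ((m:ℕ):ℝ) ≠ 0 := by positivity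
  -- the clamp function
  set τ : ℝ → ℝ := fun x => min 1 (max 0 x) with hτdef
  have hτc : Continuous τ := continuous_const.min (continuous_const.max continuous_id)
  have hτmem : ∀ x, τ x ∈ Icc (0:ℝ) 1 :=
    fun x => ⟨le_min zero_le_one (le_max_left 0 x), min_le_left _ _⟩
  have hτid : ∀ x ∈ Icc (0:ℝ) 1, τ x = x := by
    intro x hx
    rw [hτdef]
    dsimp only
    rw [max_eq_right hx.1, min_eq_right hx.2]
  -- the modified path
  set v : ℝ → ℝ := fun x => w (τ x) with hvdef
  have hv : Continuous v := hwc.comp_continuous hτc hτmem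
  have hveq : ∀ x ∈ Icc (0:ℝ) 1, v x = w x := fun x hx => by rw [hvdef]; simp [hτid x hx]
  obtain ⟨Cw, hCw⟩ := isCompact_Icc.exists_bound_of_continuousOn hwc
  have hvb : ∀ x, |v x| ≤ Cw := fun x => by
    simpa [Real.norm_eq_abs] using hCw (τ x) (hτmem x)
  -- the primitive of φ'
  set P1 : ℝ → ℝ := fun x => ∫ u in Ioc (0:ℝ) x, φ' u with hP1def
  have hP1c : ContinuousOn P1 (Icc (0:ℝ) 1) := intervalIntegral.continuousOn_primitive hφ'int
  set ψ : ℝ → ℝ := fun x => P1 (τ x) with hψdef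
  have hψc : Continuous ψ := hP1c.comp_continuous hτc hτmem
  have hψφ : ∀ x ∈ Icc (0:ℝ) 1, ψ x = φ x := by
    intro x hx
    rw [hψdef]
    dsimp only
    rw [hτid x hx, hφrepr x hx, intervalIntegral.integral_of_le hx.1, hP1def]
  -- the primitive of v * φ'
  have hvφ' : IntegrableOn (fun u => v u * φ' u) (Icc (0:ℝ) 1) := by
    refine Integrable.bdd_mul (c := Cw) hφ'int hv.aestronglyMeasurable ?_
    exact Filter.Eventually.of_forall (fun x => by simpa [Real.norm_eq_abs] using hvb x)
  set P2 : ℝ → ℝ := fun x => ∫ u in Ioc (0:ℝ) x, v u * φ' u with hP2def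
  have hP2c : ContinuousOn P2 (Icc (0:ℝ) 1) := intervalIntegral.continuousOn_primitive hvφ'
  set Fv : ℝ → ℝ := fun x => P2 (τ x) with hFvdef
  have hFvc : Continuous Fv := hP2c.comp_continuous hτc hτmem
  -- the iterated integral
  set Ct : ℝ → ℝ → ℝ := fun s t => Fv t - Fv s - v s * (ψ t - ψ s) with hCtdef
  have hCtc : Continuous (fun p : ℝ × ℝ => Ct p.1 p.2) := by
    rw [hCtdef]
    exact ((hFvc.comp continuous_snd).sub (hFvc.comp continuous_fst)).sub
      ((hv.comp continuous_fst).mul ((hψc.comp continuous_snd).sub (hψc.comp continuous_fst)))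
  -- additivity of primitives
  have hadd : ∀ (f : ℝ → ℝ), IntegrableOn f (Icc (0:ℝ) 1) → ∀ s t : ℝ, 0 ≤ s → s ≤ t → t ≤ 1 →
      (∫ u in Ioc (0:ℝ) t, f u) - (∫ u in Ioc (0:ℝ) s, f u) = ∫ u in Ioc s t, f u := by
    intro f hf s t hs0 hst ht1
    have h1 : IntegrableOn f (Ioc 0 s) :=
      hf.mono_set (fun u hu => ⟨hu.1.le, hu.2.trans (hst.trans ht1)⟩)
    have h2 : IntegrableOn f (Ioc s t) :=
      hf.mono_set (fun u hu => ⟨hs0.trans hu.1.le, hu.2.trans ht1⟩)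
    rw [← Ioc_union_Ioc_eq_Ioc hs0 hst,
      setIntegral_union (Set.Ioc_disjoint_Ioc_of_le le_rfl) measurableSet_Ioc h1 h2]
    ring
  have hψinc : ∀ s t : ℝ, 0 ≤ s → s ≤ t → t ≤ 1 → ψ t - ψ s = ∫ u in Ioc s t, φ' u := by
    intro s t hs0 hst ht1
    rw [hψdef]
    dsimp only
    rw [hτid t ⟨hs0.trans hst, ht1⟩, hτid s ⟨hs0, hst.trans ht1⟩, hP1def]
    exact hadd φ' hφ'int s t hs0 hst ht1
  have hFvinc : ∀ s t : ℝ, 0 ≤ s → s ≤ t → t ≤ 1 → Fv t - Fv s = ∫ u in Ioc s t, v u * φ' u := by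
    intro s t hs0 hst ht1
    rw [hFvdef]
    dsimp only
    rw [hτid t ⟨hs0.trans hst, ht1⟩, hτid s ⟨hs0, hst.trans ht1⟩, hP2def]
    exact hadd _ hvφ' s t hs0 hst ht1
  have hsubIoc : ∀ s t : ℝ, 0 ≤ s → t ≤ 1 → Ioc s t ⊆ Icc (0:ℝ) 1 :=
    fun s t hs0 ht1 u hu => ⟨hs0.trans hu.1.le, hu.2.trans ht1⟩
  have hCt_int : ∀ s t : ℝ, 0 ≤ s → s ≤ t → t ≤ 1 →
      Ct s t = ∫ u in Ioc s t, (v u - v s) * φ' u := by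
    intro s t hs0 hst ht1
    rw [hCtdef]
    dsimp only
    rw [hFvinc s t hs0 hst ht1, hψinc s t hs0 hst ht1]
    rw [← MeasureTheory.integral_const_mul]
    rw [← MeasureTheory.integral_sub (hvφ'.mono_set (hsubIoc s t hs0 ht1))
      (((hφ'int.mono_set (hsubIoc s t hs0 ht1))).const_mul (v s))]
    apply setIntegral_congr_fun measurableSet_Ioc
    intro u _
    ring
  have hCw_eq : ∀ p ∈ simplexSet,
      (∫ u in p.1..p.2, (w u - w p.1) * φ' u) = Ct p.1 p.2 := by
    rintro ⟨s, t⟩ ⟨hs0, hst, ht1⟩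
    rw [intervalIntegral.integral_of_le hst, hCt_int s t hs0 hst ht1]
    apply setIntegral_congr_fun measurableSet_Ioc
    intro u hu
    dsimp only
    rw [hveq u (hsubIoc s t hs0 ht1 hu), hveq s ⟨hs0, hst.trans ht1⟩]
  -- the Cameron-Martin constant
  set κ : ℝ := ∫ u in (0:ℝ)..1, φ' u ^ 2 with hκdef
  have hκIoc : κ = ∫ u in Ioc (0:ℝ) 1, φ' u ^ 2 := by
    rw [hκdef, intervalIntegral.integral_of_le zero_le_one]
  have hκ0 : 0 ≤ κ := by
    rw [hκIoc]
    exact setIntegral_nonneg measurableSet_Ioc (fun x _ => sq_nonneg _)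
  set K : ℝ := Real.sqrt κ with hKdef
  have hK0 : 0 ≤ K := Real.sqrt_nonneg _
  have hKm : K ^ m = κ ^ k := by rw [hKdef, hkm, pow_mul, Real.sq_sqrt hκ0]
  have hφ'sq1 : IntegrableOn (fun u => φ' u ^ 2) (Ioc (0:ℝ) 1) :=
    hφ'sq.mono_set Ioc_subset_Icc_self
  have hφ'sqm : ∀ s t : ℝ, 0 ≤ s → s ≤ t → t ≤ 1 → ∫ u in Ioc s t, φ' u ^ 2 ≤ κ := by
    intro s t hs0 hst ht1
    rw [hκIoc]
    refine setIntegral_mono_set hφ'sq1 ?_ ?_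
    · exact Filter.Eventually.of_forall (fun x => sq_nonneg _)
    · exact HasSubset.Subset.eventuallyLE (Ioc_subset_Ioc hs0 ht1)
  -- increment bound for ψ
  have hψbound : ∀ s t : ℝ, 0 ≤ s → s ≤ t → t ≤ 1 →
      |ψ t - ψ s| ≤ Real.sqrt (t - s) * K := by
    intro s t hs0 hst ht1
    rw [hψinc s t hs0 hst ht1]
    have habs : |∫ u in Ioc s t, φ' u| ≤ ∫ u in Ioc s t, |(fun _ => (1:ℝ)) u * φ' u| := by
      simp only [one_mul]
      simpa [Real.norm_eq_abs] using
        norm_integral_le_integral_norm (μ := volume.restrict (Ioc s t)) φ'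
    refine habs.trans ?_
    have hCS := integral_abs_mul_le (a := s) (b := t) (f := fun _ => (1:ℝ)) (g := φ')
      aestronglyMeasurable_const ((hφ'int.mono_set (hsubIoc s t hs0 ht1)).aestronglyMeasurable)
      (Cf := 1) (fun x => by norm_num) (hφ'sq.mono_set (hsubIoc s t hs0 ht1))
    refine hCS.trans ?_
    have h1 : ∫ x in Ioc s t, ((fun _ => (1:ℝ)) x) ^ 2 = t - s := by
      simp [Real.volume_real_Ioc, max_eq_left (sub_nonneg.2 hst)]
    rw [h1, hKdef]
    exact mul_le_mul_of_nonneg_left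
      (Real.sqrt_le_sqrt (hφ'sqm s t hs0 hst ht1)) (Real.sqrt_nonneg _)
  -- CS bound for Ct
  have hCtb : ∀ s t : ℝ, 0 ≤ s → s ≤ t → t ≤ 1 →
      |Ct s t| ≤ Real.sqrt (∫ u in Ioc s t, (v u - v s) ^ 2) * K := by
    intro s t hs0 hst ht1
    rw [hCt_int s t hs0 hst ht1]
    have habs : |∫ u in Ioc s t, (v u - v s) * φ' u|
        ≤ ∫ u in Ioc s t, |v u - v s| * |φ' u| := by
      simpa [Real.norm_eq_abs, abs_mul] using norm_integral_le_integral_norm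
        (μ := volume.restrict (Ioc s t)) (fun u => (v u - v s) * φ' u)
    refine habs.trans ?_
    have hCS := integral_abs_mul_le (a := s) (b := t) (f := fun u => v u - v s) (g := φ')
      ((hv.sub continuous_const).aestronglyMeasurable)
      ((hφ'int.mono_set (hsubIoc s t hs0 ht1)).aestronglyMeasurable)
      (Cf := Cw + Cw)
      (fun x => (abs_sub (v x) (v s)).trans (add_le_add (hvb x) (hvb s)))
      (hφ'sq.mono_set (hsubIoc s t hs0 ht1))
    simp only [abs_mul] at hCS
    refine hCS.trans ?_
    rw [hKdef]
    exact mul_le_mul_of_nonneg_left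
      (Real.sqrt_le_sqrt (hφ'sqm s t hs0 hst ht1)) (Real.sqrt_nonneg _)
  -- the w Besov quantity
  set A : ℝ := incNorm m (θ/2) w with hAdef
  have hWnn : ∀ p ∈ simplexSet,
      0 ≤ |w p.2 - w p.1| ^ m / (p.2 - p.1) ^ (2 + (m:ℝ) * (θ/2)) :=
    fun p hp => div_nonneg (pow_nonneg (abs_nonneg _) _)
      (Real.rpow_nonneg (sub_nonneg.2 hp.2.1) _)
  have hIw0 : 0 ≤ ∫ p in simplexSet, |w p.2 - w p.1| ^ m / (p.2 - p.1) ^ (2 + (m:ℝ) * (θ/2)) :=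
    setIntegral_nonneg measurableSet_simplexSet hWnn
  have hA0 : 0 ≤ A := by
    rw [hAdef]
    unfold incNorm besovNorm
    exact Real.rpow_nonneg hIw0 _
  have hAm : ∫ p in simplexSet, |w p.2 - w p.1| ^ m / (p.2 - p.1) ^ (2 + (m:ℝ) * (θ/2))
      = A ^ m := by
    rw [hAdef]
    unfold incNorm besovNorm
    rw [← Real.rpow_natCast ((∫ p in simplexSet,
        |w p.2 - w p.1| ^ m / (p.2 - p.1) ^ (2 + (m:ℝ) * (θ/2))) ^ ((1:ℝ)/m)) m,
      ← Real.rpow_mul hIw0, one_div, inv_mul_cancel₀ hMne, Real.rpow_one]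
  have hwLint : (∫⁻ p in simplexSet,
      ENNReal.ofReal (|v p.2 - v p.1| ^ m / (p.2 - p.1) ^ (2 + (m:ℝ) * (θ/2))))
      = ENNReal.ofReal (A ^ m) := by
    rw [setLIntegral_congr_fun_ae measurableSet_simplexSet
      (Filter.Eventually.of_forall (fun p (hp : p ∈ simplexSet) => by
        rw [hveq p.2 ⟨hp.1.trans hp.2.1, hp.2.2⟩, hveq p.1 ⟨hp.1, hp.2.1.trans hp.2.2⟩]))]
    rw [← ofReal_integral_eq_lintegral_ofReal hwB
      (ae_restrict_of_forall_mem measurableSet_simplexSet hWnn), hAm]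

  -- measurability of denominators
  have hdenmeas : ∀ e : ℝ, Measurable fun p : ℝ × ℝ => (p.2 - p.1) ^ e :=
    fun e => (measurable_snd.sub measurable_fst).pow_const e
  -- Part 1
  have g1 : incNorm m (θ/2) φ ≤ K := by
    have hcong : incNorm m (θ/2) φ = besovNorm m (θ/2) (fun s t => ψ t - ψ s) := by
      unfold incNorm besovNorm
      congr 1
      refine setIntegral_congr_fun measurableSet_simplexSet (fun p hp => ?_)
      dsimp only
      rw [← hψφ p.1 ⟨hp.1, hp.2.1.trans hp.2.2⟩, ← hψφ p.2 ⟨hp.1.trans hp.2.1, hp.2.2⟩]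
    rw [hcong]
    refine besov_le_of_lintegral_le hm0 hK0 ?_ ?_
    · exact ((((hψc.comp continuous_snd).sub (hψc.comp continuous_fst)).abs.pow m).measurable.div
        (hdenmeas _)).aestronglyMeasurable
    · have hptw : ∀ p ∈ simplexSet,
          ENNReal.ofReal (|ψ p.2 - ψ p.1| ^ m / (p.2 - p.1) ^ (2 + (m:ℝ) * (θ/2)))
          ≤ ENNReal.ofReal (κ ^ k) := by
        rintro ⟨s, t⟩ hpmem
        obtain ⟨hs0, hst, ht1⟩ : 0 ≤ s ∧ s ≤ t ∧ t ≤ 1 := hpmem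
        show ENNReal.ofReal (|ψ t - ψ s| ^ m / (t - s) ^ (2 + (m:ℝ) * (θ/2)))
          ≤ ENNReal.ofReal (κ ^ k)
        apply ENNReal.ofReal_le_ofReal
        rcases eq_or_lt_of_le hst with heq | hlt
        · subst heq
          have hz : |ψ s - ψ s| ^ m / (s - s) ^ (2 + (m:ℝ)*(θ/2)) = 0 := by
            simp [zero_pow hm0.ne']
          rw [hz]
          exact pow_nonneg hκ0 k
        · have hd : 0 < t - s := sub_pos.2 hlt
          have hd1 : t - s ≤ 1 := by linarith
          have h1 : |ψ t - ψ s| ^ m ≤ (t - s) ^ k * κ ^ k := by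
            calc |ψ t - ψ s| ^ m ≤ (Real.sqrt (t - s) * K) ^ m :=
                pow_le_pow_left₀ (abs_nonneg _) (hψbound s t hs0 hst ht1) m
              _ = (t - s) ^ k * κ ^ k := by
                rw [mul_pow, hKm, hkm, pow_mul, Real.sq_sqrt hd.le]
          have hDpos : 0 < (t - s) ^ (2 + (m:ℝ)*(θ/2)) := Real.rpow_pos_of_pos hd _
          calc |ψ t - ψ s| ^ m / (t - s) ^ (2 + (m:ℝ)*(θ/2))
              ≤ ((t - s) ^ k * κ ^ k) / (t - s) ^ (2 + (m:ℝ)*(θ/2)) := by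
                rw [div_eq_mul_inv, div_eq_mul_inv]
                exact mul_le_mul_of_nonneg_right h1 (inv_nonneg.2 hDpos.le)
            _ = κ ^ k * ((t - s) ^ ((k:ℕ):ℝ) / (t - s) ^ (2 + (m:ℝ)*(θ/2))) := by
                rw [Real.rpow_natCast]
                ring
            _ = κ ^ k * (t - s) ^ ((k:ℝ) - (2 + (m:ℝ)*(θ/2))) := by
                rw [Real.rpow_sub hd]
            _ ≤ κ ^ k * 1 := by
                refine mul_le_mul_of_nonneg_left ?_ (pow_nonneg hκ0 k)
                refine Real.rpow_le_one hd.le hd1 ?_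
                nlinarith [hmθ]
            _ = κ ^ k := mul_one _
      calc (∫⁻ p in simplexSet,
            ENNReal.ofReal (|ψ p.2 - ψ p.1| ^ m / (p.2 - p.1) ^ (2 + (m:ℝ) * (θ/2))))
          ≤ ∫⁻ _ in simplexSet, ENNReal.ofReal (κ ^ k) :=
            lintegral_mono_ae (ae_restrict_of_forall_mem measurableSet_simplexSet hptw)
        _ = ENNReal.ofReal (κ ^ k) * volume simplexSet := setLIntegral_const _ _
        _ ≤ ENNReal.ofReal (κ ^ k) * 1 := mul_le_mul_right volume_simplexSet_le _
        _ = ENNReal.ofReal (K ^ m) := by rw [mul_one, hKm]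
  -- main lintegral bound for the iterated integral
  have hmain : (∫⁻ p in simplexSet,
      ENNReal.ofReal (|Ct p.1 p.2| ^ m / (p.2 - p.1) ^ (2 + (m:ℝ) * θ)))
      ≤ ENNReal.ofReal ((A * K) ^ m) := by
    have hβδ : 0 < ((k:ℝ) - 3 - (m:ℝ)*θ) + (2 + (m:ℝ)*(θ/2)) := by nlinarith [hmθ]
    have hpt : ∀ p ∈ simplexSet,
        ENNReal.ofReal (|Ct p.1 p.2| ^ m / (p.2 - p.1) ^ (2 + (m:ℝ) * θ))
        ≤ ENNReal.ofReal (κ ^ k) * (ENNReal.ofReal ((p.2 - p.1) ^ ((k:ℝ) - 3 - (m:ℝ)*θ)) *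
            ∫⁻ u in Ioc p.1 p.2, ENNReal.ofReal (|v u - v p.1| ^ m)) := by
      rintro ⟨s, t⟩ hpmem
      obtain ⟨hs0, hst, ht1⟩ : 0 ≤ s ∧ s ≤ t ∧ t ≤ 1 := hpmem
      show ENNReal.ofReal (|Ct s t| ^ m / (t - s) ^ (2 + (m:ℝ) * θ))
        ≤ ENNReal.ofReal (κ ^ k) * (ENNReal.ofReal ((t - s) ^ ((k:ℝ) - 3 - (m:ℝ)*θ)) *
            ∫⁻ u in Ioc s t, ENNReal.ofReal (|v u - v s| ^ m))
      have hJint : IntegrableOn (fun u => |v u - v s| ^ m) (Ioc s t) :=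
        ((hv.sub continuous_const).abs.pow m).integrableOn_Ioc
      have hJnn : 0 ≤ᵐ[volume.restrict (Ioc s t)] fun u => |v u - v s| ^ m :=
        Filter.Eventually.of_forall (fun u => pow_nonneg (abs_nonneg _) m)
      rw [← ofReal_integral_eq_lintegral_ofReal hJint hJnn]
      rcases eq_or_lt_of_le hst with heq | hlt
      · subst heq
        have hz : |Ct s s| ^ m / (s - s) ^ (2 + (m:ℝ)*θ) = 0 := by
          rw [hCtdef]
          simp [zero_pow hm0.ne']
        rw [hz]
        simp
      · have hd : 0 < t - s := sub_pos.2 hlt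
        have hd1 : t - s ≤ 1 := by linarith
        rw [← ENNReal.ofReal_mul (Real.rpow_nonneg hd.le _),
          ← ENNReal.ofReal_mul (pow_nonneg hκ0 k)]
        apply ENNReal.ofReal_le_ofReal
        set J : ℝ := ∫ u in Ioc s t, |v u - v s| ^ m with hJdef
        have hJ0 : 0 ≤ J :=
          setIntegral_nonneg measurableSet_Ioc (fun u _ => pow_nonneg (abs_nonneg _) m)
        set Iv : ℝ := ∫ u in Ioc s t, (v u - v s) ^ 2 with hIvdef
        have hIv0 : 0 ≤ Iv := setIntegral_nonneg measurableSet_Ioc (fun u _ => sq_nonneg _)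
        have h1 : |Ct s t| ^ m ≤ Iv ^ k * κ ^ k := by
          calc |Ct s t| ^ m ≤ (Real.sqrt Iv * K) ^ m :=
              pow_le_pow_left₀ (abs_nonneg _) (hCtb s t hs0 hst ht1) m
            _ = Iv ^ k * κ ^ k := by
              rw [mul_pow, hKm, hkm, pow_mul, Real.sq_sqrt hIv0]
        have h2 : Iv ^ k ≤ (t - s) ^ (k - 1) * J := by
          have hb : ∀ x : ℝ, (v x - v s) ^ 2 ≤ (Cw + Cw) ^ 2 := by
            intro x
            have h := (abs_sub (v x) (v s)).trans (add_le_add (hvb x) (hvb s))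
            calc (v x - v s) ^ 2 = |v x - v s| ^ 2 := (sq_abs _).symm
              _ ≤ (Cw + Cw) ^ 2 := pow_le_pow_left₀ (abs_nonneg _) h 2
          have hP := pow_setIntegral_le (f := fun x => (v x - v s) ^ 2) hst hk2
            ((hv.sub continuous_const).pow 2).aestronglyMeasurable
            (fun x => sq_nonneg _) hb
          have hJr : (∫ x in Ioc s t, ((v x - v s) ^ 2) ^ k) = J := by
            rw [hJdef]
            refine setIntegral_congr_fun measurableSet_Ioc (fun x _ => ?_)
            rw [← pow_mul, ← hkm, Even.pow_abs hmeven]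
          beta_reduce at hP
          rw [hJr] at hP
          exact hP
        have hDpos : 0 < (t - s) ^ (2 + (m:ℝ)*θ) := Real.rpow_pos_of_pos hd _
        have h3 : (t - s) ^ ((k - 1 : ℕ):ℝ) / (t - s) ^ (2 + (m:ℝ)*θ)
            = (t - s) ^ ((k:ℝ) - 3 - (m:ℝ)*θ) := by
          rw [← Real.rpow_sub hd]
          congr 1
          push_cast [Nat.cast_sub (show 1 ≤ k by omega)]
          ring
        calc |Ct s t| ^ m / (t - s) ^ (2 + (m:ℝ)*θ)
            ≤ (Iv ^ k * κ ^ k) / (t - s) ^ (2 + (m:ℝ)*θ) := by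
              rw [div_eq_mul_inv, div_eq_mul_inv]
              exact mul_le_mul_of_nonneg_right h1 (inv_nonneg.2 hDpos.le)
          _ ≤ (((t - s) ^ (k - 1) * J) * κ ^ k) / (t - s) ^ (2 + (m:ℝ)*θ) := by
              rw [div_eq_mul_inv, div_eq_mul_inv]
              exact mul_le_mul_of_nonneg_right
                (mul_le_mul_of_nonneg_right h2 (pow_nonneg hκ0 k)) (inv_nonneg.2 hDpos.le)
          _ = κ ^ k * ((t - s) ^ ((k - 1:ℕ):ℝ) / (t - s) ^ (2 + (m:ℝ)*θ) * J) := by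
              rw [Real.rpow_natCast]
              ring
          _ = κ ^ k * ((t - s) ^ ((k:ℝ) - 3 - (m:ℝ)*θ) * J) := by rw [h3]
    calc (∫⁻ p in simplexSet, ENNReal.ofReal (|Ct p.1 p.2| ^ m / (p.2 - p.1) ^ (2 + (m:ℝ)*θ)))
        ≤ ∫⁻ p in simplexSet, ENNReal.ofReal (κ ^ k) *
            (ENNReal.ofReal ((p.2 - p.1) ^ ((k:ℝ) - 3 - (m:ℝ)*θ)) *
              ∫⁻ u in Ioc p.1 p.2, ENNReal.ofReal (|v u - v p.1| ^ m)) :=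
          lintegral_mono_ae (ae_restrict_of_forall_mem measurableSet_simplexSet hpt)
      _ = ENNReal.ofReal (κ ^ k) * ∫⁻ p in simplexSet,
            ENNReal.ofReal ((p.2 - p.1) ^ ((k:ℝ) - 3 - (m:ℝ)*θ)) *
              ∫⁻ u in Ioc p.1 p.2, ENNReal.ofReal (|v u - v p.1| ^ m) :=
          lintegral_const_mul' _ _ ENNReal.ofReal_ne_top
      _ ≤ ENNReal.ofReal (κ ^ k) * ∫⁻ p in simplexSet,
            ENNReal.ofReal (|v p.2 - v p.1| ^ m / (p.2 - p.1) ^ (2 + (m:ℝ)*(θ/2))) :=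
          mul_le_mul_right
            (key_fubini hv m (mul_nonneg (Nat.cast_nonneg m) (by linarith)) hβδ) _
      _ = ENNReal.ofReal (κ ^ k) * ENNReal.ofReal (A ^ m) := by rw [hwLint]
      _ = ENNReal.ofReal ((A * K) ^ m) := by
          rw [← ENNReal.ofReal_mul (pow_nonneg hκ0 k)]
          congr 1
          rw [mul_pow, hKm]
          ring
  -- Part 2
  have g2 : besovNorm m θ (fun s t => ∫ u in s..t, (w u - w s) * φ' u) ≤ A * K := by
    have hcong : besovNorm m θ (fun s t => ∫ u in s..t, (w u - w s) * φ' u)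
        = besovNorm m θ Ct := by
      unfold besovNorm
      congr 1
      refine setIntegral_congr_fun measurableSet_simplexSet (fun p hp => ?_)
      dsimp only
      rw [hCw_eq p hp]
    rw [hcong]
    refine besov_le_of_lintegral_le hm0 (mul_nonneg hA0 hK0) ?_ hmain
    exact ((hCtc.abs.pow m).measurable.div (hdenmeas _)).aestronglyMeasurable
  -- Part 3
  have hkey : ∀ (x d : ℝ), 0 ≤ d →
      ENNReal.ofReal (|x| / d ^ ((2 + (m:ℝ)*θ)/(m:ℝ))) ^ ((m:ℕ):ℝ)
        = ENNReal.ofReal (|x| ^ m / d ^ (2 + (m:ℝ)*θ)) := by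
    intro x d hd
    rw [ENNReal.rpow_natCast,
      ← ENNReal.ofReal_pow (div_nonneg (abs_nonneg _) (Real.rpow_nonneg hd _))]
    congr 1
    rw [div_pow, ← Real.rpow_natCast (d ^ ((2 + (m:ℝ)*θ)/(m:ℝ))) m, ← Real.rpow_mul hd,
      div_mul_cancel₀ _ hMne]
  have hf1m : Measurable fun p : ℝ × ℝ =>
      ENNReal.ofReal
        (|(v p.2 - v p.1) * (ψ p.2 - ψ p.1)| / (p.2 - p.1) ^ ((2 + (m:ℝ)*θ)/(m:ℝ))) :=
    ((((hv.comp continuous_snd).sub (hv.comp continuous_fst)).mul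
        ((hψc.comp continuous_snd).sub (hψc.comp continuous_fst))).abs.measurable.div
      (hdenmeas _)).ennreal_ofReal
  have hf2m : Measurable fun p : ℝ × ℝ =>
      ENNReal.ofReal (|Ct p.1 p.2| / (p.2 - p.1) ^ ((2 + (m:ℝ)*θ)/(m:ℝ))) :=
    (hCtc.abs.measurable.div (hdenmeas _)).ennreal_ofReal
  have hf2int : (∫⁻ p in simplexSet,
      ENNReal.ofReal (|Ct p.1 p.2| / (p.2 - p.1) ^ ((2 + (m:ℝ)*θ)/(m:ℝ))) ^ ((m:ℕ):ℝ))
      ≤ ENNReal.ofReal ((A * K) ^ m) := by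
    refine le_trans (le_of_eq ?_) hmain
    refine setLIntegral_congr_fun_ae measurableSet_simplexSet
      (Filter.Eventually.of_forall (fun p (hp : p ∈ simplexSet) => ?_))
    exact hkey _ _ (sub_nonneg.2 hp.2.1)
  have hf1int : (∫⁻ p in simplexSet,
      ENNReal.ofReal
        (|(v p.2 - v p.1) * (ψ p.2 - ψ p.1)| / (p.2 - p.1) ^ ((2 + (m:ℝ)*θ)/(m:ℝ)))
        ^ ((m:ℕ):ℝ))
      ≤ ENNReal.ofReal ((A * K) ^ m) := by
    have hstep : ∀ p ∈ simplexSet,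
        ENNReal.ofReal
          (|(v p.2 - v p.1) * (ψ p.2 - ψ p.1)| / (p.2 - p.1) ^ ((2 + (m:ℝ)*θ)/(m:ℝ)))
          ^ ((m:ℕ):ℝ)
        ≤ ENNReal.ofReal (κ ^ k) *
            ENNReal.ofReal (|v p.2 - v p.1| ^ m / (p.2 - p.1) ^ (2 + (m:ℝ)*(θ/2))) := by
      rintro ⟨s, t⟩ hpmem
      obtain ⟨hs0, hst, ht1⟩ : 0 ≤ s ∧ s ≤ t ∧ t ≤ 1 := hpmem
      show ENNReal.ofReal
          (|(v t - v s) * (ψ t - ψ s)| / (t - s) ^ ((2 + (m:ℝ)*θ)/(m:ℝ))) ^ ((m:ℕ):ℝ)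
        ≤ ENNReal.ofReal (κ ^ k) *
            ENNReal.ofReal (|v t - v s| ^ m / (t - s) ^ (2 + (m:ℝ)*(θ/2)))
      rw [hkey _ _ (sub_nonneg.2 hst), ← ENNReal.ofReal_mul (pow_nonneg hκ0 k)]
      apply ENNReal.ofReal_le_ofReal
      rcases eq_or_lt_of_le hst with heq | hlt
      · subst heq
        have hz : |(v s - v s) * (ψ s - ψ s)| ^ m = 0 := by
          simp [zero_pow hm0.ne']
        rw [hz, zero_div]
        exact mul_nonneg (pow_nonneg hκ0 k)
          (div_nonneg (pow_nonneg (abs_nonneg _) _) (Real.rpow_nonneg (by simp) _))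
      · have hd : 0 < t - s := sub_pos.2 hlt
        have hd1 : t - s ≤ 1 := by linarith
        have h1 : |(v t - v s) * (ψ t - ψ s)| ^ m ≤ |v t - v s| ^ m * ((t - s) ^ k * κ ^ k) := by
          rw [abs_mul, mul_pow]
          refine mul_le_mul_of_nonneg_left ?_ (pow_nonneg (abs_nonneg _) m)
          calc |ψ t - ψ s| ^ m ≤ (Real.sqrt (t - s) * K) ^ m :=
              pow_le_pow_left₀ (abs_nonneg _) (hψbound s t hs0 hst ht1) m
            _ = (t - s) ^ k * κ ^ k := by
              rw [mul_pow, hKm, hkm, pow_mul, Real.sq_sqrt hd.le]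
        have h4 : (t - s) ^ ((k:ℕ):ℝ) / (t - s) ^ (2 + (m:ℝ)*θ)
            ≤ 1 / (t - s) ^ (2 + (m:ℝ)*(θ/2)) := by
          rw [← Real.rpow_sub hd, one_div, ← Real.rpow_neg hd.le,
            show ((k:ℕ):ℝ) - (2 + (m:ℝ)*θ) = -(2 + (m:ℝ)*(θ/2)) + ((k:ℝ) - (m:ℝ)*(θ/2)) by ring,
            Real.rpow_add hd]
          refine mul_le_of_le_one_right (Real.rpow_nonneg hd.le _) ?_
          refine Real.rpow_le_one hd.le hd1 ?_
          nlinarith [hmθ]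
        have hDpos : 0 < (t - s) ^ (2 + (m:ℝ)*θ) := Real.rpow_pos_of_pos hd _
        calc |(v t - v s) * (ψ t - ψ s)| ^ m / (t - s) ^ (2 + (m:ℝ)*θ)
            ≤ (|v t - v s| ^ m * ((t - s) ^ k * κ ^ k)) / (t - s) ^ (2 + (m:ℝ)*θ) := by
              rw [div_eq_mul_inv, div_eq_mul_inv]
              exact mul_le_mul_of_nonneg_right h1 (inv_nonneg.2 hDpos.le)
          _ = (|v t - v s| ^ m * κ ^ k) * ((t - s) ^ ((k:ℕ):ℝ) / (t - s) ^ (2 + (m:ℝ)*θ)) := by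
              rw [Real.rpow_natCast]
              ring
          _ ≤ (|v t - v s| ^ m * κ ^ k) * (1 / (t - s) ^ (2 + (m:ℝ)*(θ/2))) :=
              mul_le_mul_of_nonneg_left h4
                (mul_nonneg (pow_nonneg (abs_nonneg _) m) (pow_nonneg hκ0 k))
          _ = κ ^ k * (|v t - v s| ^ m / (t - s) ^ (2 + (m:ℝ)*(θ/2))) := by ring
    calc (∫⁻ p in simplexSet,
          ENNReal.ofReal
            (|(v p.2 - v p.1) * (ψ p.2 - ψ p.1)| / (p.2 - p.1) ^ ((2 + (m:ℝ)*θ)/(m:ℝ)))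
            ^ ((m:ℕ):ℝ))
        ≤ ∫⁻ p in simplexSet, ENNReal.ofReal (κ ^ k) *
            ENNReal.ofReal (|v p.2 - v p.1| ^ m / (p.2 - p.1) ^ (2 + (m:ℝ)*(θ/2))) :=
          lintegral_mono_ae (ae_restrict_of_forall_mem measurableSet_simplexSet hstep)
      _ = ENNReal.ofReal (κ ^ k) * ∫⁻ p in simplexSet,
            ENNReal.ofReal (|v p.2 - v p.1| ^ m / (p.2 - p.1) ^ (2 + (m:ℝ)*(θ/2))) :=
          lintegral_const_mul' _ _ ENNReal.ofReal_ne_top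
      _ = ENNReal.ofReal (κ ^ k) * ENNReal.ofReal (A ^ m) := by rw [hwLint]
      _ = ENNReal.ofReal ((A * K) ^ m) := by
          rw [← ENNReal.ofReal_mul (pow_nonneg hκ0 k)]
          congr 1
          rw [mul_pow, hKm]
          ring
  have h1M : (1:ℝ) ≤ ((m:ℕ):ℝ) := Nat.one_le_cast.mpr hm0
  have hMink := ENNReal.lintegral_Lp_add_le (μ := volume.restrict simplexSet)
    hf1m.aemeasurable hf2m.aemeasurable h1M
  have hroot : ∀ X : ENNReal, X ≤ ENNReal.ofReal ((A*K) ^ m) →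
      X ^ ((1:ℝ)/((m:ℕ):ℝ)) ≤ ENNReal.ofReal (A*K) := by
    intro X hX
    calc X ^ ((1:ℝ)/((m:ℕ):ℝ)) ≤ (ENNReal.ofReal ((A*K) ^ m)) ^ ((1:ℝ)/((m:ℕ):ℝ)) :=
        ENNReal.rpow_le_rpow hX (by positivity)
      _ = ENNReal.ofReal (A*K) := by
        rw [ENNReal.ofReal_pow (mul_nonneg hA0 hK0),
          ← ENNReal.rpow_natCast (ENNReal.ofReal (A*K)) m, ← ENNReal.rpow_mul,
          mul_one_div, div_self hMne, ENNReal.rpow_one]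
  have hsum : (∫⁻ p in simplexSet,
      ((fun p : ℝ × ℝ => ENNReal.ofReal
          (|(v p.2 - v p.1) * (ψ p.2 - ψ p.1)| / (p.2 - p.1) ^ ((2 + (m:ℝ)*θ)/(m:ℝ))))
        + fun p : ℝ × ℝ => ENNReal.ofReal
          (|Ct p.1 p.2| / (p.2 - p.1) ^ ((2 + (m:ℝ)*θ)/(m:ℝ)))) p ^ ((m:ℕ):ℝ))
      ≤ ENNReal.ofReal ((2*A*K) ^ m) := by
    have hb := hMink.trans (add_le_add (hroot _ hf1int) (hroot _ hf2int))
    have hb2 := ENNReal.rpow_le_rpow hb (show (0:ℝ) ≤ ((m:ℕ):ℝ) by positivity)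
    rw [← ENNReal.rpow_mul, one_div, inv_mul_cancel₀ hMne, ENNReal.rpow_one] at hb2
    refine hb2.trans (le_of_eq ?_)
    rw [← ENNReal.ofReal_add (mul_nonneg hA0 hK0) (mul_nonneg hA0 hK0),
      ENNReal.rpow_natCast,
      ← ENNReal.ofReal_pow (by nlinarith [mul_nonneg hA0 hK0])]
    congr 1
    ring
  have h3main : (∫⁻ p in simplexSet, ENNReal.ofReal
      (|(v p.2 - v p.1) * (ψ p.2 - ψ p.1) - Ct p.1 p.2| ^ m / (p.2 - p.1) ^ (2 + (m:ℝ)*θ)))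
      ≤ ENNReal.ofReal ((2*A*K) ^ m) := by
    refine le_trans
      (lintegral_mono_ae (ae_restrict_of_forall_mem measurableSet_simplexSet ?_)) hsum
    intro p hp
    have hst : (0:ℝ) ≤ p.2 - p.1 := sub_nonneg.2 hp.2.1
    simp only [Pi.add_apply]
    rw [← hkey _ _ hst]
    refine ENNReal.rpow_le_rpow ?_ (by positivity)
    have htri : |(v p.2 - v p.1) * (ψ p.2 - ψ p.1) - Ct p.1 p.2|
        ≤ |(v p.2 - v p.1) * (ψ p.2 - ψ p.1)| + |Ct p.1 p.2| := abs_sub _ _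
    calc ENNReal.ofReal
          (|(v p.2 - v p.1) * (ψ p.2 - ψ p.1) - Ct p.1 p.2|
            / (p.2 - p.1) ^ ((2 + (m:ℝ)*θ)/(m:ℝ)))
        ≤ ENNReal.ofReal
          ((|(v p.2 - v p.1) * (ψ p.2 - ψ p.1)| + |Ct p.1 p.2|)
            / (p.2 - p.1) ^ ((2 + (m:ℝ)*θ)/(m:ℝ))) := by
          apply ENNReal.ofReal_le_ofReal
          rw [div_eq_mul_inv, div_eq_mul_inv]
          exact mul_le_mul_of_nonneg_right htri
            (inv_nonneg.2 (Real.rpow_nonneg hst _))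
      _ = ENNReal.ofReal
            (|(v p.2 - v p.1) * (ψ p.2 - ψ p.1)| / (p.2 - p.1) ^ ((2 + (m:ℝ)*θ)/(m:ℝ)))
          + ENNReal.ofReal (|Ct p.1 p.2| / (p.2 - p.1) ^ ((2 + (m:ℝ)*θ)/(m:ℝ))) := by
          rw [add_div]
          exact ENNReal.ofReal_add
            (div_nonneg (abs_nonneg _) (Real.rpow_nonneg hst _))
            (div_nonneg (abs_nonneg _) (Real.rpow_nonneg hst _))
  have g3 : besovNorm m θ
      (fun s t => (w t - w s) * (φ t - φ s) - ∫ u in s..t, (w u - w s) * φ' u)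
      ≤ 2 * A * K := by
    have hcong : besovNorm m θ
        (fun s t => (w t - w s) * (φ t - φ s) - ∫ u in s..t, (w u - w s) * φ' u)
        = besovNorm m θ (fun s t => (v t - v s) * (ψ t - ψ s) - Ct s t) := by
      unfold besovNorm
      congr 1
      refine setIntegral_congr_fun measurableSet_simplexSet (fun p hp => ?_)
      dsimp only
      rw [hCw_eq p hp, ← hveq p.2 ⟨hp.1.trans hp.2.1, hp.2.2⟩,
        ← hveq p.1 ⟨hp.1, hp.2.1.trans hp.2.2⟩,
        ← hψφ p.2 ⟨hp.1.trans hp.2.1, hp.2.2⟩, ← hψφ p.1 ⟨hp.1, hp.2.1.trans hp.2.2⟩]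
    rw [hcong]
    refine besov_le_of_lintegral_le hm0
      (mul_nonneg (mul_nonneg zero_le_two hA0) hK0) ?_ h3main
    exact ((((((hv.comp continuous_snd).sub (hv.comp continuous_fst)).mul
      ((hψc.comp continuous_snd).sub (hψc.comp continuous_fst))).sub hCtc).abs.pow
        m).measurable.div (hdenmeas _)).aestronglyMeasurable
  exact ⟨g1, g2, g3⟩
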